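/- Let μ be a nonnegative Borel measure on a homogeneous group N with Haar measure m and balls B(n,r) of measure m(B(0,1))r^Q. Define M_{HL}μ(n) = sup_{r>0} μ(B(n,r))/m(B(n,r)) and, for β > 0, Q[μ](n,a) = ∫_N q_a(n₁⁻¹n) dμ(n₁) where q_a(X,Z) = c_β a^{2β}(16a²+8a‖X‖²+d(X,Z)²)^{−Q/2−β}. Then there is a constant C_β > 0 such that for all n₀ ∈ N, C_β M_{HL}μ(n₀) ≤ sup_{a>0} Q[μ](n₀,a). -/

import Mathlib

open MeasureTheory

noncomputable section

abbrev HV (p : ℕ) := EuclideanSpace ℝ (Fin (2 * p))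
abbrev HZ (k : ℕ) := EuclideanSpace ℝ (Fin k)
abbrev HG (p k : ℕ) := HV p × HZ k

/-- The homogeneous norm `d(X,Z) = (‖X‖⁴ + 16‖Z‖²)^{1/2}` on the H-type group. -/
def hnorm {p k : ℕ} (n : HG p k) : ℝ := Real.sqrt (‖n.1‖ ^ 4 + 16 * ‖n.2‖ ^ 2)

/-- The H-type group multiplication determined by the (skew-symmetric) bilinear
bracket `br`: `(X,Z)(X',Z') = (X + X', Z + Z' + ½[X,X'])`. -/
def hmul {p k : ℕ} (br : HV p →L[ℝ] HV p →L[ℝ] HZ k) (m n : HG p k) : HG p k :=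
  (m.1 + n.1, m.2 + n.2 + (2⁻¹ : ℝ) • br m.1 n.1)

/-- Group inverse on the H-type group. -/
def hinv {p k : ℕ} (n : HG p k) : HG p k := (-n.1, -n.2)

/-- The `d`-ball `B(n,r) = {n₁ : d(n⁻¹ n₁) < r}`. -/
def hball {p k : ℕ} (br : HV p →L[ℝ] HV p →L[ℝ] HZ k) (n : HG p k) (r : ℝ) :
    Set (HG p k) :=
  {n₁ | hnorm (hmul br (hinv n) n₁) < r}

/-- The nonisotropic dilation `δ_r(X,Z) = (√r X, r Z)`. -/
def hdil {p k : ℕ} (r : ℝ) (n : HG p k) : HG p k := (Real.sqrt r • n.1, r • n.2)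

lemma hmul_inv_symm {p k : ℕ} (br : HV p →L[ℝ] HV p →L[ℝ] HZ k)
    (hskew : ∀ X Y, br X Y = -br Y X) (n₀ n₁ : HG p k) :
    hmul br (hinv n₁) n₀ = hinv (hmul br (hinv n₀) n₁) := by
  simp only [hmul, hinv, Prod.mk.injEq, map_neg, ContinuousLinearMap.neg_apply,
    hskew n₁.1 n₀.1]
  constructor
  · abel
  · module

lemma hnorm_hinv {p k : ℕ} (n : HG p k) : hnorm (hinv n) = hnorm n := by
  simp [hnorm, hinv]

/-- the Hardy–Littlewood maximal function is dominated by the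
radial maximal function of the Poisson-type integral `Q[μ]`. -/
theorem stmt8 (p k : ℕ) (Q β cβ : ℝ) (hQ : Q = (p : ℝ) + k) (hβ : 0 < β) (hcβ : 0 < cβ)
    (br : HV p →L[ℝ] HV p →L[ℝ] HZ k) (hskew : ∀ X Y, br X Y = -br Y X)
    (μ : Measure (HG p k))
    (hm : ∀ (n : HG p k) (r : ℝ), 0 < r →
      volume (hball br n r) = volume (hball br 0 1) * ENNReal.ofReal (r ^ Q))
    (hm0 : 0 < volume (hball br 0 1)) (hm1 : volume (hball br 0 1) < ⊤) :
    ∃ C : ℝ, 0 < C ∧ ∀ n₀ : HG p k,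
      ENNReal.ofReal C *
          (⨆ r : {r : ℝ // 0 < r}, μ (hball br n₀ r) / volume (hball br n₀ r))
        ≤ ⨆ a : {a : ℝ // 0 < a},
            ∫⁻ n₁, ENNReal.ofReal (cβ * (a : ℝ) ^ (2 * β) *
              (16 * (a : ℝ) ^ 2 + 8 * (a : ℝ) * ‖(hmul br (hinv n₁) n₀).1‖ ^ 2 +
                hnorm (hmul br (hinv n₁) n₀) ^ 2) ^ (-(Q / 2 + β))) ∂μ := by
  set V := volume (hball br 0 1) with hV
  have hQ0 : 0 ≤ Q := by rw [hQ]; positivity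
  have hγ : (0:ℝ) ≤ Q / 2 + β := by linarith
  set c0 : ℝ := cβ * (25:ℝ) ^ (-(Q / 2 + β)) with hc0def
  have hc0 : 0 < c0 := by positivity
  have hVt : 0 < V.toReal := ENNReal.toReal_pos hm0.ne' hm1.ne
  refine ⟨c0 * V.toReal, by positivity, fun n₀ => ?_⟩
  rw [ENNReal.mul_iSup]
  refine iSup_le fun r => le_trans ?_ (le_iSup _ r)
  obtain ⟨r, hr⟩ := r
  -- measurability of the ball
  have hB : MeasurableSet (hball br n₀ r) := by
    have hcont : Continuous fun n₁ : HG p k => hnorm (hmul br (hinv n₀) n₁) := by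
      unfold hnorm hmul hinv
      fun_prop
    exact (isOpen_lt hcont continuous_const).measurableSet
  -- pointwise kernel lower bound on the ball
  have key : ∀ n₁ ∈ hball br n₀ r,
      ENNReal.ofReal (c0 * r ^ (-Q)) ≤
        ENNReal.ofReal (cβ * r ^ (2 * β) *
          (16 * r ^ 2 + 8 * r * ‖(hmul br (hinv n₁) n₀).1‖ ^ 2 +
            hnorm (hmul br (hinv n₁) n₀) ^ 2) ^ (-(Q / 2 + β))) := by
    intro n₁ hn₁
    have hrw := hmul_inv_symm br hskew n₀ n₁
    set d : ℝ := hnorm (hmul br (hinv n₀) n₁) with hd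
    set X : ℝ := ‖(hmul br (hinv n₀) n₁).1‖ with hX
    have hdn : hnorm (hmul br (hinv n₁) n₀) = d := by rw [hrw, hnorm_hinv]
    have hXn : ‖(hmul br (hinv n₁) n₀).1‖ = X := by
      rw [hrw, show (hinv (hmul br (hinv n₀) n₁)).1 = -(hmul br (hinv n₀) n₁).1 from rfl,
        norm_neg]
    have hdr : d < r := hn₁
    have hd0 : 0 ≤ d := Real.sqrt_nonneg _
    have hX2d : X ^ 2 ≤ d := by
      have h1 : X ^ 2 = Real.sqrt (X ^ 4) := by
        rw [show X ^ 4 = (X ^ 2) ^ 2 by ring, Real.sqrt_sq (by positivity)]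
      rw [h1, hd, hnorm]
      exact Real.sqrt_le_sqrt (by nlinarith [sq_nonneg ‖(hmul br (hinv n₀) n₁).2‖])
    rw [hdn, hXn]
    apply ENNReal.ofReal_le_ofReal
    set D : ℝ := 16 * r ^ 2 + 8 * r * X ^ 2 + d ^ 2 with hD
    have hD0 : 0 < D := by nlinarith
    have hD25 : D ≤ 25 * r ^ 2 := by nlinarith
    have hrpow : (25 * r ^ 2) ^ (-(Q / 2 + β)) ≤ D ^ (-(Q / 2 + β)) :=
      Real.rpow_le_rpow_of_nonpos hD0 hD25 (by linarith)
    have heq : c0 * r ^ (-Q) = cβ * r ^ (2 * β) * (25 * r ^ 2) ^ (-(Q / 2 + β)) := by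
      rw [Real.mul_rpow (by norm_num) (by positivity),
        show (r:ℝ) ^ (2:ℕ) = r ^ ((2:ℕ):ℝ) by rw [Real.rpow_natCast],
        ← Real.rpow_mul hr.le, hc0def,
        show (-Q) = 2 * β + ((2:ℕ):ℝ) * (-(Q / 2 + β)) by push_cast; ring,
        Real.rpow_add hr]
      ring
    rw [heq]
    have hk : 0 ≤ cβ * r ^ (2 * β) := by positivity
    exact mul_le_mul_of_nonneg_left hrpow hk
  -- lower bound the integral by a constant times the measure of the ball
  have h1 : ENNReal.ofReal (c0 * r ^ (-Q)) * μ (hball br n₀ r) ≤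
      ∫⁻ n₁, ENNReal.ofReal (cβ * (r : ℝ) ^ (2 * β) *
        (16 * (r : ℝ) ^ 2 + 8 * (r : ℝ) * ‖(hmul br (hinv n₁) n₀).1‖ ^ 2 +
          hnorm (hmul br (hinv n₁) n₀) ^ 2) ^ (-(Q / 2 + β))) ∂μ := by
    have h2 : ENNReal.ofReal (c0 * r ^ (-Q)) * μ (hball br n₀ r) =
        ∫⁻ n₁, (hball br n₀ r).indicator
          (fun _ => ENNReal.ofReal (c0 * r ^ (-Q))) n₁ ∂μ := by
      rw [lintegral_indicator hB, setLIntegral_const]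
    rw [h2]
    refine lintegral_mono fun n₁ => ?_
    by_cases hn₁ : n₁ ∈ hball br n₀ r
    · rw [Set.indicator_of_mem hn₁]; exact key n₁ hn₁
    · rw [Set.indicator_of_notMem hn₁]; exact zero_le
  refine le_trans ?_ h1
  -- arithmetic with ENNReal
  rw [hm n₀ r hr]
  set x : ENNReal := ENNReal.ofReal (r ^ Q) with hx
  have hx0 : x ≠ 0 := by
    simp only [hx, ne_eq, ENNReal.ofReal_eq_zero, not_le]
    positivity
  have hxt : x ≠ ⊤ := ENNReal.ofReal_ne_top
  have hCr : ENNReal.ofReal (c0 * V.toReal) = ENNReal.ofReal c0 * V := by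
    rw [ENNReal.ofReal_mul hc0.le, ENNReal.ofReal_toReal hm1.ne]
  have hcr : ENNReal.ofReal (c0 * r ^ (-Q)) = ENNReal.ofReal c0 * x⁻¹ := by
    rw [ENNReal.ofReal_mul hc0.le, Real.rpow_neg hr.le,
      ENNReal.ofReal_inv_of_pos (by positivity)]
  rw [hCr, hcr, div_eq_mul_inv, ENNReal.mul_inv (Or.inl hm0.ne') (Or.inl hm1.ne)]
  refine le_of_eq ?_
  rw [show ENNReal.ofReal c0 * V * (μ (hball br n₀ r) * (V⁻¹ * x⁻¹)) =
      ENNReal.ofReal c0 * x⁻¹ * μ (hball br n₀ r) * (V * V⁻¹) by ring,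
    ENNReal.mul_inv_cancel hm0.ne' hm1.ne, mul_one]
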